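/- The finite cyclic group ℤ/nℤ (n ≥ 1) admits exactly φ(n) left-invariant circular orders, where φ is Euler's totient function. -/

import Mathlib

def sgn3 (a b c : ℕ) : ℤ :=
  if a = b ∨ b = c ∨ a = c then 0
  else if (a < b ∧ b < c) ∨ (b < c ∧ c < a) ∨ (c < a ∧ a < b) then 1 else -1

lemma sgn3_eq_zero_iff (a b c : ℕ) : sgn3 a b c = 0 ↔ (a = b ∨ b = c ∨ a = c) := by
  unfold sgn3
  split_ifs with h h2
  · simpa using h
  · simp [h]
  · simp [h]

lemma sgn3_zero_lt {a b : ℕ} (ha : 0 < a) (hb : 0 < b) (hab : a ≠ b) :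
    sgn3 0 a b = if a < b then 1 else -1 := by
  unfold sgn3; split_ifs <;> omega

lemma mod_two_lt {x n : ℕ} (h : x < 2 * n) : x % n = if x < n then x else x - n := by
  split_ifs with h1
  · exact Nat.mod_eq_of_lt h1
  · rw [Nat.mod_eq_sub_mod (by omega)]
    exact Nat.mod_eq_of_lt (by omega)

lemma sgn3_rot {n a b c d : ℕ} (ha : a < n) (hb : b < n) (hc : c < n) (hd : d < n) :
    sgn3 ((a + b) % n) ((a + c) % n) ((a + d) % n) = sgn3 b c d := by
  rw [mod_two_lt (by omega), mod_two_lt (by omega), mod_two_lt (by omega)]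
  unfold sgn3; split_ifs <;> omega

lemma rot_lemma {n : ℕ} (hn : 0 < n) (t : ℕ → ℕ) (ht : ∀ a, a < n → t a < n)
    (hinj : ∀ a b, a < n → b < n → t a = t b → a = b)
    (hpres : ∀ a b c, a < n → b < n → c < n → sgn3 (t a) (t b) (t c) = sgn3 a b c) :
    ∀ a, a < n → t a = (a + t 0) % n := by
  have ht0 : t 0 < n := ht 0 hn
  set k : ℕ := if t 0 = 0 then 0 else n - t 0 with hk
  have hkn : k < n := by rw [hk]; split_ifs <;> omega
  set t' : ℕ → ℕ := fun a => (t a + k) % n with ht'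
  have ht'lt : ∀ a, a < n → t' a < n := fun a ha => Nat.mod_lt _ hn
  have ht'0 : t' 0 = 0 := by
    rw [ht']; simp only [hk]
    split_ifs with h
    · simp [h, Nat.mod_eq_of_lt hn]
    · rw [show t 0 + (n - t 0) = n by omega, Nat.mod_self]
  have ht'inj : ∀ a b, a < n → b < n → t' a = t' b → a = b := by
    intro a b ha hb hab
    apply hinj a b ha hb
    rw [ht'] at hab
    simp only at hab
    rw [mod_two_lt (by have := ht a ha; omega), mod_two_lt (by have := ht b hb; omega)] at hab
    have := ht a ha; have := ht b hb
    split_ifs at hab <;> omega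
  have ht'pres : ∀ a b c, a < n → b < n → c < n →
      sgn3 (t' a) (t' b) (t' c) = sgn3 a b c := by
    intro a b c ha hb hc
    rw [ht']
    simp only
    rw [add_comm (t a) k, add_comm (t b) k, add_comm (t c) k,
      sgn3_rot hkn (ht a ha) (ht b hb) (ht c hc)]
    exact hpres a b c ha hb hc
  have hne : ∀ a, 0 < a → a < n → 0 < t' a := by
    intro a ha han
    rcases Nat.eq_zero_or_pos (t' a) with h | h
    · exfalso
      have := ht'inj a 0 han hn (by rw [h, ht'0])
      omega
    · exact h
  have mono : ∀ a b, 0 < a → a < n → 0 < b → b < n → a < b → t' a < t' b := by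
    intro a b ha han hb hbn hab
    have h1 : sgn3 0 a b = 1 := by rw [sgn3_zero_lt ha hb (by omega)]; simp [hab]
    have h2 := ht'pres 0 a b hn han hbn
    rw [ht'0, h1] at h2
    have hta := hne a ha han
    have htb := hne b hb hbn
    have htab : t' a ≠ t' b := fun h => by have := ht'inj a b han hbn h; omega
    rw [sgn3_zero_lt hta htb htab] at h2
    by_cases h3 : t' a < t' b
    · exact h3
    · rw [if_neg h3] at h2; omega
  have hfix : ∀ a, 0 < a → a < n → t' a = a := by
    intro a ha han
    have hge : a ≤ t' a := by
      have hmaps : ∀ x ∈ Finset.Ico 1 (a + 1), t' x ∈ Finset.Ico 1 (t' a + 1) := by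
        intro x hx
        simp only [Finset.mem_Ico] at hx ⊢
        constructor
        · exact hne x (by omega) (by omega)
        · rcases Nat.lt_or_ge x a with h | h
          · have := mono x a (by omega) (by omega) ha han h; omega
          · have hxa : x = a := by omega
            rw [hxa]
            omega
      have hinjOn : Set.InjOn t' (Finset.Ico 1 (a + 1)) := by
        intro x hx y hy hxy
        simp only [Finset.coe_Ico, Set.mem_Ico] at hx hy
        exact ht'inj x y (by omega) (by omega) hxy
      have hcard := Finset.card_le_card_of_injOn t' hmaps hinjOn
      simpa [Nat.card_Ico] using hcard
    have hle : t' a ≤ a := by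
      have hmaps : ∀ x ∈ Finset.Ico a n, t' x ∈ Finset.Ico (t' a) n := by
        intro x hx
        simp only [Finset.mem_Ico] at hx ⊢
        constructor
        · rcases Nat.lt_or_ge a x with h | h
          · have := mono a x ha han (by omega) (by omega) h; omega
          · have hxa : x = a := by omega
            rw [hxa]
        · exact ht'lt x (by omega)
      have hinjOn : Set.InjOn t' (Finset.Ico a n) := by
        intro x hx y hy hxy
        simp only [Finset.coe_Ico, Set.mem_Ico] at hx hy
        exact ht'inj x y (by omega) (by omega) hxy
      have hcard := Finset.card_le_card_of_injOn t' hmaps hinjOn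
      simp only [Nat.card_Ico] at hcard
      have := ht'lt a han
      omega
    omega
  intro a han
  have hta : t a < n := ht a han
  have h : t' a = if a = 0 then 0 else a := by
    split_ifs with h
    · subst h; exact ht'0
    · exact hfix a (by omega) han
  rw [ht'] at h
  simp only at h
  rw [mod_two_lt (by omega)] at h
  rw [mod_two_lt (by omega)]
  rw [hk] at h
  split_ifs at h <;> split_ifs <;> omega

/-- A circular order (as a set) on `G`: a cocycle `c : G³ → {-1,0,1}`
vanishing exactly on degenerate triples and satisfying the 2-cocycle identity. -/
def IsCircularOrder {G : Type*} (c : G → G → G → ℤ) : Prop :=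
  (∀ x y z : G, c x y z = -1 ∨ c x y z = 0 ∨ c x y z = 1) ∧
  (∀ x y z : G, c x y z = 0 ↔ (x = y ∨ y = z ∨ x = z)) ∧
  (∀ g₀ g₁ g₂ g₃ : G, c g₁ g₂ g₃ - c g₀ g₂ g₃ + c g₀ g₁ g₃ - c g₀ g₁ g₂ = 0)

/-- Invariance of a circular order under left multiplication. -/
def IsLeftInvariant {G : Type*} [Group G] (c : G → G → G → ℤ) : Prop :=
  ∀ g x y z : G, c (g * x) (g * y) (g * z) = c x y z

def IsAddInvariant {G : Type*} [AddGroup G] (c : G → G → G → ℤ) : Prop :=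
  ∀ g x y z : G, c (g + x) (g + y) (g + z) = c x y z

lemma sgn3_vals (a b c : ℕ) : sgn3 a b c = -1 ∨ sgn3 a b c = 0 ∨ sgn3 a b c = 1 := by
  unfold sgn3; split_ifs <;> simp

lemma sgn3_cocycle (a b c d : ℕ) :
    sgn3 b c d - sgn3 a c d + sgn3 a b d - sgn3 a b c = 0 := by
  unfold sgn3; split_ifs <;> omega

section Std

variable {n : ℕ} [NeZero n]

/-- The standard circular order twisted by `u`. -/
def stdC (u : ZMod n) (x y z : ZMod n) : ℤ := sgn3 (x * u).val (y * u).val (z * u).val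

lemma stdC_circ (u : (ZMod n)ˣ) : IsCircularOrder (stdC (u : ZMod n)) := by
  have hval : ∀ x y : ZMod n, ((x * u).val = (y * u).val) ↔ x = y := by
    intro x y
    constructor
    · intro h
      have h2 := ZMod.val_injective n h
      have h3 := congrArg (· * ((u⁻¹ : (ZMod n)ˣ) : ZMod n)) h2
      simpa [mul_assoc, ← Units.val_mul] using h3
    · intro h; rw [h]
  refine ⟨fun x y z => sgn3_vals _ _ _, fun x y z => ?_, fun a b c d => sgn3_cocycle _ _ _ _⟩
  unfold stdC
  rw [sgn3_eq_zero_iff, hval, hval, hval]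

lemma stdC_inv (u : ZMod n) : IsAddInvariant (stdC u) := by
  intro g x y z
  unfold stdC
  rw [add_mul, add_mul, add_mul, ZMod.val_add, ZMod.val_add, ZMod.val_add,
    sgn3_rot (ZMod.val_lt _) (ZMod.val_lt _) (ZMod.val_lt _) (ZMod.val_lt _)]

lemma stdC_inj (hn2 : 2 ≤ n) (u v : (ZMod n)ˣ) (h : stdC (u : ZMod n) = stdC (v : ZMod n)) :
    u = v := by
  haveI : Fact (1 < n) := ⟨hn2⟩
  by_contra huv
  have hval_unit : ∀ w : (ZMod n)ˣ, 2 ≤ (w : ZMod n).val ∨ (w : ZMod n).val = 1 := by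
    intro w
    rcases Nat.lt_or_ge (w : ZMod n).val 2 with hw | hw
    · right
      interval_cases hvw : (w : ZMod n).val
      · exfalso
        have h0 : (w : ZMod n) = 0 := by
          have := ZMod.natCast_zmod_val (w : ZMod n)
          rw [hvw] at this
          simpa using this.symm
        exact w.ne_zero h0
      · rfl
    · left; exact hw
  have key := congrFun (congrFun (congrFun h 0) ((u⁻¹ : (ZMod n)ˣ) : ZMod n))
    ((v⁻¹ : (ZMod n)ˣ) : ZMod n)
  unfold stdC at key
  rw [zero_mul, zero_mul] at key
  have e1 : ((u⁻¹ : (ZMod n)ˣ) : ZMod n) * (u : ZMod n) = 1 := by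
    rw [← Units.val_mul]; simp
  have e2 : ((v⁻¹ : (ZMod n)ˣ) : ZMod n) * (v : ZMod n) = 1 := by
    rw [← Units.val_mul]; simp
  have e3 : ((v⁻¹ : (ZMod n)ˣ) : ZMod n) * (u : ZMod n) = ((v⁻¹ * u : (ZMod n)ˣ) : ZMod n) := by
    rw [Units.val_mul]
  have e4 : ((u⁻¹ : (ZMod n)ˣ) : ZMod n) * (v : ZMod n) = ((u⁻¹ * v : (ZMod n)ˣ) : ZMod n) := by
    rw [Units.val_mul]
  rw [e1, e2, e3, e4, ZMod.val_zero, ZMod.val_one] at key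
  have ha : 2 ≤ ((v⁻¹ * u : (ZMod n)ˣ) : ZMod n).val := by
    rcases hval_unit (v⁻¹ * u) with h' | h'
    · exact h'
    · exfalso
      have : ((v⁻¹ * u : (ZMod n)ˣ) : ZMod n) = 1 := by
        have := ZMod.natCast_zmod_val ((v⁻¹ * u : (ZMod n)ˣ) : ZMod n)
        rw [h'] at this
        simpa using this.symm
      have : v⁻¹ * u = 1 := Units.ext this
      exact huv (inv_mul_eq_one.mp this).symm
  have hb : 2 ≤ ((u⁻¹ * v : (ZMod n)ˣ) : ZMod n).val := by
    rcases hval_unit (u⁻¹ * v) with h' | h'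
    · exact h'
    · exfalso
      have : ((u⁻¹ * v : (ZMod n)ˣ) : ZMod n) = 1 := by
        have := ZMod.natCast_zmod_val ((u⁻¹ * v : (ZMod n)ˣ) : ZMod n)
        rw [h'] at this
        simpa using this.symm
      have : u⁻¹ * v = 1 := Units.ext this
      exact huv (inv_mul_eq_one.mp this)
  set a := ((v⁻¹ * u : (ZMod n)ˣ) : ZMod n).val
  set b := ((u⁻¹ * v : (ZMod n)ˣ) : ZMod n).val
  rw [sgn3_zero_lt (by omega) (by omega) (by omega),
    sgn3_zero_lt (by omega) (by omega) (by omega)] at key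
  rw [if_pos (by omega), if_neg (by omega)] at key
  omega

end Std

lemma stdC_surj {n : ℕ} [NeZero n] (c : ZMod n → ZMod n → ZMod n → ℤ)
    (hc : IsCircularOrder c) (hinv : IsAddInvariant c) :
    ∃ u : (ZMod n)ˣ, stdC (u : ZMod n) = c := by
  classical
  obtain ⟨hval, hzero, hcoc⟩ := hc
  have hnpos : 0 < n := Nat.pos_of_ne_zero (NeZero.ne n)
  -- alternating properties
  have alt2 : ∀ x y z, c x z y = - c x y z := by
    intro x y z
    have h := hcoc x y z y
    have h1 : c y z y = 0 := (hzero _ _ _).2 (Or.inr (Or.inr rfl))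
    have h2 : c x y y = 0 := (hzero _ _ _).2 (Or.inr (Or.inl rfl))
    omega
  -- the rank function
  set r : ZMod n → ℕ :=
    fun x => if x = 0 then 0 else 1 + (Finset.univ.filter (fun y => c 0 y x = 1)).card with hr
  have hr0 : r 0 = 0 := by rw [hr]; simp
  have hrpos : ∀ x, x ≠ 0 → 0 < r x := by
    intro x hx; rw [hr]; simp only [if_neg hx]; omega
  -- totality
  have htot : ∀ x y : ZMod n, x ≠ 0 → y ≠ 0 → x ≠ y → c 0 x y = 1 ∨ c 0 y x = 1 := by
    intro x y hx hy hxy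
    rcases hval 0 x y with h | h | h
    · right
      have := alt2 0 x y
      omega
    · exfalso
      rcases (hzero 0 x y).1 h with h' | h' | h'
      · exact hx h'.symm
      · exact hxy h'
      · exact hy h'.symm
    · left; exact h
  -- transitivity
  have htrans : ∀ x y z : ZMod n, c 0 x y = 1 → c 0 y z = 1 → c 0 x z = 1 := by
    intro x y z h1 h2
    have h := hcoc 0 x y z
    rcases hval x y z with h3 | h3 | h3 <;> rcases hval 0 x z with h4 | h4 | h4 <;> omega
  -- rank is strictly monotone
  have hmono : ∀ x y : ZMod n, x ≠ 0 → y ≠ 0 → c 0 x y = 1 → r x < r y := by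
    intro x y hx hy hxy
    have hsub : (Finset.univ.filter (fun z => c 0 z x = 1)) ⊆
        (Finset.univ.filter (fun z => c 0 z y = 1)) := by
      intro z hz
      simp only [Finset.mem_filter, Finset.mem_univ, true_and] at hz ⊢
      exact htrans z x y hz hxy
    have hxmem : x ∈ (Finset.univ.filter (fun z => c 0 z y = 1)) := by
      simp only [Finset.mem_filter, Finset.mem_univ, true_and]
      exact hxy
    have hxnot : x ∉ (Finset.univ.filter (fun z => c 0 z x = 1)) := by
      simp only [Finset.mem_filter, Finset.mem_univ, true_and]
      intro h
      have := (hzero 0 x x).2 (Or.inr (Or.inl rfl))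
      omega
    have hlt := Finset.card_lt_card (Finset.ssubset_iff_of_subset hsub |>.2 ⟨x, hxmem, hxnot⟩)
    rw [hr]
    simp only [if_neg hx, if_neg hy]
    omega
  -- rank is bounded
  have hrlt : ∀ x : ZMod n, r x < n := by
    intro x
    by_cases hx : x = 0
    · rw [hx, hr0]; exact hnpos
    · have hsub : (Finset.univ.filter (fun y => c 0 y x = 1)) ⊆
          (Finset.univ.erase 0).erase x := by
        intro z hz
        simp only [Finset.mem_filter, Finset.mem_univ, true_and] at hz
        rw [Finset.mem_erase, Finset.mem_erase]
        refine ⟨fun h => ?_, fun h => ?_, Finset.mem_univ _⟩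
        · rw [h] at hz
          have := (hzero 0 x x).2 (Or.inr (Or.inl rfl))
          omega
        · rw [h] at hz
          have := (hzero 0 0 x).2 (Or.inl rfl)
          omega
      have hcard := Finset.card_le_card hsub
      have hx0 : x ∈ Finset.univ.erase (0 : ZMod n) := by
        rw [Finset.mem_erase]; exact ⟨hx, Finset.mem_univ _⟩
      have hpos : 0 < (Finset.univ.erase (0 : ZMod n)).card := Finset.card_pos.mpr ⟨x, hx0⟩
      rw [Finset.card_erase_of_mem hx0, Finset.card_erase_of_mem (Finset.mem_univ _),
        Finset.card_univ, ZMod.card] at hcard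
      rw [Finset.card_erase_of_mem (Finset.mem_univ _), Finset.card_univ, ZMod.card] at hpos
      have hrx : r x = 1 + (Finset.univ.filter (fun y => c 0 y x = 1)).card := by
        rw [hr]; simp only [if_neg hx]
      rw [hrx]
      omega
  -- rank is injective
  have hrinj : Function.Injective r := by
    intro x y h
    by_contra hxy
    by_cases hx : x = 0
    · subst hx
      rw [hr0] at h
      have := hrpos y (fun h' => hxy h'.symm)
      omega
    · by_cases hy : y = 0
      · subst hy
        rw [hr0] at h
        have := hrpos x hx
        omega
      · rcases htot x y hx hy hxy with h' | h'
        · have := hmono x y hx hy h'; omega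
        · have := hmono y x hy hx h'; omega
  -- the equiv
  set f : ZMod n → Fin n := fun x => ⟨r x, hrlt x⟩ with hf
  have hfinj : Function.Injective f := by
    intro x y h
    apply hrinj
    have := congrArg Fin.val h
    simpa [hf] using this
  have hfbij : Function.Bijective f := by
    rw [Fintype.bijective_iff_injective_and_card]
    exact ⟨hfinj, by simp [ZMod.card]⟩
  set e := Equiv.ofBijective f hfbij with he
  have hesymm : ∀ (x : ZMod n), e.symm ⟨r x, hrlt x⟩ = x := by
    intro x
    apply e.injective
    rw [Equiv.apply_symm_apply]
    rfl
  have heval : ∀ (a : ℕ) (h : a < n), r (e.symm ⟨a, h⟩) = a := by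
    intro a h
    exact congrArg Fin.val (e.apply_symm_apply ⟨a, h⟩)
  -- basepoint comparison
  have hd : ∀ y z : ZMod n, c 0 y z = sgn3 0 (r y) (r z) := by
    intro y z
    by_cases hy : y = 0
    · subst hy
      rw [hr0, (hzero 0 0 z).2 (Or.inl rfl), ((sgn3_eq_zero_iff 0 0 (r z)).2 (Or.inl rfl)).symm]
    · by_cases hz : z = 0
      · subst hz
        rw [hr0, (hzero 0 y 0).2 (Or.inr (Or.inr rfl)),
          ((sgn3_eq_zero_iff 0 (r y) 0).2 (Or.inr (Or.inr rfl))).symm]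
      · by_cases hyz : y = z
        · subst hyz
          rw [(hzero 0 y y).2 (Or.inr (Or.inl rfl)),
            ((sgn3_eq_zero_iff 0 (r y) (r y)).2 (Or.inr (Or.inl rfl))).symm]
        · have h1 := hrpos y hy
          have h2 := hrpos z hz
          have h3 : r y ≠ r z := fun h => hyz (hrinj h)
          rw [sgn3_zero_lt h1 h2 h3]
          rcases htot y z hy hz hyz with h' | h'
          · rw [if_pos (hmono y z hy hz h')]; exact h'
          · have hlt := hmono z y hz hy h'
            rw [if_neg (by omega)]
            have := alt2 0 z y
            omega
  -- claim A
  have hA : ∀ x y z : ZMod n, c x y z = sgn3 (r x) (r y) (r z) := by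
    intro x y z
    have h1 := hcoc 0 x y z
    have h2 := sgn3_cocycle 0 (r x) (r y) (r z)
    have h3 := hd y z
    have h4 := hd x z
    have h5 := hd x y
    omega
  -- claim B
  have hB : ∀ g x : ZMod n, r (g + x) = (r x + r g) % n := by
    intro g x
    set t : ℕ → ℕ := fun a => if h : a < n then r (g + e.symm ⟨a, h⟩) else 0 with ht
    have htlt : ∀ a, a < n → t a < n := by
      intro a ha; rw [ht]; simp only [dif_pos ha]; exact hrlt _
    have htinj : ∀ a b, a < n → b < n → t a = t b → a = b := by
      intro a b ha hb hab
      rw [ht] at hab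
      simp only [dif_pos ha, dif_pos hb] at hab
      have := hrinj hab
      have := add_left_cancel this
      have := e.symm.injective this
      simpa using this
    have htpres : ∀ a b c', a < n → b < n → c' < n →
        sgn3 (t a) (t b) (t c') = sgn3 a b c' := by
      intro a b c' ha hb hc'
      rw [ht]
      simp only [dif_pos ha, dif_pos hb, dif_pos hc']
      rw [← hA, hinv, hA, heval a ha, heval b hb, heval c' hc']
    have key := rot_lemma hnpos t htlt htinj htpres
    have ht0 : t 0 = r g := by
      rw [ht]
      simp only [dif_pos hnpos]
      have h0 : e.symm ⟨0, hnpos⟩ = 0 := by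
        have : (⟨0, hnpos⟩ : Fin n) = ⟨r 0, hrlt 0⟩ := by
          apply Fin.ext; simp [hr0]
        rw [this, hesymm]
      rw [h0, add_zero]
    have hx := key (r x) (hrlt x)
    rw [ht0] at hx
    simp only [ht, dif_pos (hrlt x)] at hx
    rw [hesymm] at hx
    exact hx
  -- build ρ
  set ρ : ZMod n → ZMod n := fun x => ((r x : ℕ) : ZMod n) with hρ
  have hρval : ∀ x, (ρ x).val = r x := by
    intro x; rw [hρ]; exact ZMod.val_natCast_of_lt (hrlt x)
  have hρadd : ∀ x y, ρ (x + y) = ρ x + ρ y := by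
    intro x y
    rw [hρ]
    simp only
    rw [hB x y, ZMod.natCast_mod]
    push_cast
    ring
  have hρnat : ∀ k : ℕ, ρ ((k : ℕ) : ZMod n) = (k : ZMod n) * ρ 1 := by
    intro k
    induction k with
    | zero =>
      simp only [Nat.cast_zero, zero_mul]
      rw [hρ]
      simp [hr0]
    | succ m ih =>
      push_cast
      rw [hρadd, ih]
      ring
  have hρmul : ∀ x : ZMod n, ρ x = x * ρ 1 := by
    intro x
    have hx : ((x.val : ℕ) : ZMod n) = x := ZMod.natCast_zmod_val x
    rw [← hx, hρnat]
  have hρinj : Function.Injective ρ := by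
    intro x y h
    apply hrinj
    rw [← hρval, ← hρval, h]
  have hρsurj : Function.Surjective ρ := Finite.surjective_of_injective hρinj
  obtain ⟨y, hy⟩ := hρsurj 1
  have hunit : IsUnit (ρ 1) := by
    apply IsUnit.of_mul_eq_one (a := ρ 1) y
    rw [mul_comm, ← hρmul, hy]
  refine ⟨hunit.unit, ?_⟩
  funext x y' z
  unfold stdC
  rw [IsUnit.unit_spec, ← hρmul, ← hρmul, ← hρmul, hρval, hρval, hρval, ← hA]


/-- The finite cyclic group `ℤ/nℤ` admits exactly `φ(n)` left-invariant circular
orders, where `φ` is Euler's totient function. -/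
theorem card_circularOrders_zmod (n : ℕ) (hn : 1 ≤ n) :
    Nat.card {c : Multiplicative (ZMod n) → Multiplicative (ZMod n) →
        Multiplicative (ZMod n) → ℤ // IsCircularOrder c ∧ IsLeftInvariant c} =
      Nat.totient n := by
  rcases eq_or_lt_of_le hn with h1 | h2
  · -- the case n = 1
    have hn1 : n = 1 := h1.symm
    subst hn1
    rw [Nat.totient_one, Nat.card_eq_one_iff_unique]
    constructor
    · constructor
      rintro ⟨c, hc⟩ ⟨c', hc'⟩
      apply Subtype.ext
      funext x y z
      have hxy : x = y := Subsingleton.elim x y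
      have h := (hc.1.2.1 x y z).2 (Or.inl hxy)
      have h' := (hc'.1.2.1 x y z).2 (Or.inl hxy)
      show c x y z = c' x y z
      rw [h, h']
    · refine ⟨⟨fun _ _ _ => 0, ⟨fun x y z => Or.inr (Or.inl rfl), fun x y z => ?_,
        fun _ _ _ _ => by ring⟩, fun _ _ _ _ => rfl⟩⟩
      simp [Subsingleton.elim x y]
  · -- the case 2 ≤ n
    haveI : NeZero n := ⟨by omega⟩
    have hcard : Nat.card {c : ZMod n → ZMod n → ZMod n → ℤ //
        IsCircularOrder c ∧ IsAddInvariant c} = Nat.totient n := by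
      have hbij : Function.Bijective (fun u : (ZMod n)ˣ =>
          (⟨stdC (u : ZMod n), stdC_circ u, stdC_inv _⟩ :
            {c : ZMod n → ZMod n → ZMod n → ℤ // IsCircularOrder c ∧ IsAddInvariant c})) := by
        constructor
        · intro u v huv
          exact stdC_inj (by omega) u v (congrArg Subtype.val huv)
        · rintro ⟨c, hc, hcinv⟩
          obtain ⟨u, hu⟩ := stdC_surj c hc hcinv
          exact ⟨u, Subtype.ext hu⟩
      rw [← Nat.card_eq_of_bijective _ hbij, Nat.card_eq_fintype_card,
        ZMod.card_units_eq_totient]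
    exact hcard
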